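/- Let G be the Klein bottle group ⟨a, b | a b a⁻¹ = b⁻¹⟩ and let ρ : G → SU(2) be a group homomorphism, viewing SU(2) as the unit quaternions. If ρ(b) ∉ {1, -1}, then ρ(a)² = -1 and ρ(a) anticommutes with the imaginary part of ρ(b); moreover in this case ρ(a²) = -1. -/

import Mathlib

open Metric

/-- The relator set of the Klein bottle group `⟨a, b | a b a⁻¹ = b⁻¹⟩`,
with `a = FreeGroup.of 0` and `b = FreeGroup.of 1`. -/
def kleinRels : Set (FreeGroup (Fin 2)) :=
  {FreeGroup.of 0 * FreeGroup.of 1 * (FreeGroup.of 0)⁻¹ * FreeGroup.of 1}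

set_option maxHeartbeats 1000000 in
/-- If `ρ` is a homomorphism from the Klein bottle group to the unit quaternions
with `ρ(b) ∉ {1, -1}`, then `ρ(a)² = -1`, `ρ(a)` anticommutes with the imaginary
part of `ρ(b)`, and `ρ(a²) = -1`. -/
theorem stmt6 (ρ : PresentedGroup kleinRels →* sphere (0 : Quaternion ℝ) 1)
    (hb : (ρ (PresentedGroup.of 1) : Quaternion ℝ) ≠ 1 ∧
      (ρ (PresentedGroup.of 1) : Quaternion ℝ) ≠ -1) :
    ((ρ (PresentedGroup.of 0) : Quaternion ℝ)) ^ 2 = -1 ∧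
    ((ρ (PresentedGroup.of 0) : Quaternion ℝ)) *
        (ρ (PresentedGroup.of 1) : Quaternion ℝ).im =
      -((ρ (PresentedGroup.of 1) : Quaternion ℝ).im *
        (ρ (PresentedGroup.of 0) : Quaternion ℝ)) ∧
    (ρ ((PresentedGroup.of 0) ^ 2) : Quaternion ℝ) = -1 := by
  have hrel : (PresentedGroup.of 0 * PresentedGroup.of 1 * (PresentedGroup.of 0)⁻¹ *
      PresentedGroup.of 1 : PresentedGroup kleinRels) = 1 := by
    have : (FreeGroup.of 0 * FreeGroup.of 1 * (FreeGroup.of 0)⁻¹ * FreeGroup.of 1 :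
        FreeGroup (Fin 2)) ∈ Subgroup.normalClosure kleinRels :=
      Subgroup.subset_normalClosure rfl
    exact (QuotientGroup.eq_one_iff _).mpr this
  set A : Quaternion ℝ := (ρ (PresentedGroup.of 0) : Quaternion ℝ) with hA
  set B : Quaternion ℝ := (ρ (PresentedGroup.of 1) : Quaternion ℝ) with hB
  have hAn : Quaternion.normSq A = 1 := by
    have := (ρ (PresentedGroup.of 0)).2
    rw [mem_sphere_zero_iff_norm] at this
    rw [Quaternion.normSq_eq_norm_mul_self, this]; ring
  have hBn : Quaternion.normSq B = 1 := by
    have := (ρ (PresentedGroup.of 1)).2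
    rw [mem_sphere_zero_iff_norm] at this
    rw [Quaternion.normSq_eq_norm_mul_self, this]; ring
  have hA0 : A ≠ 0 := by intro h; rw [h] at hAn; simp at hAn
  have h1 : A * B * A⁻¹ * B = 1 := by
    have := congrArg (fun x => ((ρ x : sphere (0 : Quaternion ℝ) 1) : Quaternion ℝ)) hrel
    simpa [map_mul, map_inv, unitSphere.coe_inv] using this
  clear_value A B
  have hBinv : B⁻¹ = star B := by
    apply inv_eq_of_mul_eq_one_right
    rw [Quaternion.self_mul_star, hBn]; simp
  have hmul : A * B = star B * A := by
    have h2 : A * B * A⁻¹ = B⁻¹ := eq_inv_of_mul_eq_one_left h1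
    have h3 : A * B * A⁻¹ * A = B⁻¹ * A := by rw [h2]
    rw [inv_mul_cancel_right₀ hA0] at h3
    rw [h3, hBinv]
  rw [Quaternion.ext_iff] at hmul
  simp only [Quaternion.re_mul, Quaternion.imI_mul, Quaternion.imJ_mul, Quaternion.imK_mul,
    Quaternion.re_star, Quaternion.imI_star, Quaternion.imJ_star, Quaternion.imK_star] at hmul
  obtain ⟨e1, e2, e3, e4⟩ := hmul
  have hdot : A.imI * B.imI + A.imJ * B.imJ + A.imK * B.imK = 0 := by linarith
  have hb1 : A.re * B.imI = 0 := by linarith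
  have hb2 : A.re * B.imJ = 0 := by linarith
  have hb3 : A.re * B.imK = 0 := by linarith
  have hv : ¬(B.imI = 0 ∧ B.imJ = 0 ∧ B.imK = 0) := by
    rintro ⟨h1', h2', h3'⟩
    rw [Quaternion.normSq_def'] at hBn
    rw [h1', h2', h3'] at hBn
    have hmz : (B.re - 1) * (B.re + 1) = 0 := by nlinarith
    rcases mul_eq_zero.mp hmz with h | h
    · exact hb.1 (by ext <;> simp [show B.re = 1 by linarith, h1', h2', h3', Quaternion.re_one, Quaternion.imI_one, Quaternion.imJ_one, Quaternion.imK_one])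
    · exact hb.2 (by ext <;> simp [show B.re = -1 by linarith, h1', h2', h3', Quaternion.re_one, Quaternion.imI_one, Quaternion.imJ_one, Quaternion.imK_one])
  have ha0 : A.re = 0 := by
    by_contra h
    refine hv ⟨?_, ?_, ?_⟩
    · rcases mul_eq_zero.mp hb1 with h' | h' <;> [exact absurd h' h; exact h']
    · rcases mul_eq_zero.mp hb2 with h' | h' <;> [exact absurd h' h; exact h']
    · rcases mul_eq_zero.mp hb3 with h' | h' <;> [exact absurd h' h; exact h']
  rw [Quaternion.normSq_def'] at hAn
  have hsq : A ^ 2 = -1 := by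
    rw [sq]
    ext <;> simp [Quaternion.re_mul, Quaternion.imI_mul, Quaternion.imJ_mul,
      Quaternion.imK_mul, Quaternion.re_one, Quaternion.imI_one, Quaternion.imJ_one, Quaternion.imK_one, ha0] <;> nlinarith [hAn]
  refine ⟨hsq, ?_, ?_⟩
  · ext <;> simp [Quaternion.re_mul, Quaternion.imI_mul, Quaternion.imJ_mul,
      Quaternion.imK_mul, Quaternion.re_one, Quaternion.imI_one, Quaternion.imJ_one, Quaternion.imK_one, ha0] <;> linarith
  · rw [map_pow, unitSphere.coe_pow, ← hA, hsq]
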